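/- Let G and G' be graphs on the same vertex set, with ρ, ρ' their spectral radii and x, y corresponding nonnegative eigenvectors. Then x^T y · (ρ' − ρ) = Σ_{uv ∈ E(G')\E(G)} (x_u y_v + x_v y_u) − Σ_{uv ∈ E(G)\E(G')} (x_u y_v + x_v y_u). -/

import Mathlib

open SimpleGraph Finset

private lemma sum_edges_eq {V : Type*} [Fintype V] [DecidableEq V]
    (G : SimpleGraph V) [DecidableRel G.Adj] (x y : V → ℝ) :
    (∑ e ∈ G.edgeFinset,
        Sym2.lift ⟨fun u v => x u * y v + x v * y u, fun u v => by ring⟩ e)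
      = ∑ u : V, ∑ v : V, G.adjMatrix ℝ u v * (x u * y v) := by
  classical
  rw [← Finset.sum_product']
  have hmaps : ∀ p ∈ (Finset.univ ×ˢ Finset.univ).filter (fun p : V × V => G.Adj p.1 p.2),
      s(p.1, p.2) ∈ G.edgeFinset := by
    intro p hp
    simp only [Finset.mem_filter] at hp
    simpa [SimpleGraph.mem_edgeFinset] using hp.2
  have h1 : (∑ p ∈ (Finset.univ ×ˢ Finset.univ).filter (fun p : V × V => G.Adj p.1 p.2),
      x p.1 * y p.2)
      = ∑ e ∈ G.edgeFinset, ∑ p ∈ ((Finset.univ ×ˢ Finset.univ).filter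
          (fun p : V × V => G.Adj p.1 p.2)).filter (fun p => s(p.1, p.2) = e),
        x p.1 * y p.2 :=
    (Finset.sum_fiberwise_of_maps_to hmaps _).symm
  have h2 : ∀ u v : V, (G.adjMatrix ℝ u v) * (x u * y v)
      = if G.Adj u v then x u * y v else 0 := by
    intro u v; by_cases h : G.Adj u v <;> simp [h]
  calc (∑ e ∈ G.edgeFinset,
        Sym2.lift ⟨fun u v => x u * y v + x v * y u, fun u v => by ring⟩ e)
      = ∑ e ∈ G.edgeFinset, ∑ p ∈ ((Finset.univ ×ˢ Finset.univ).filter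
          (fun p : V × V => G.Adj p.1 p.2)).filter (fun p => s(p.1, p.2) = e),
        x p.1 * y p.2 := by
        apply Finset.sum_congr rfl
        intro e he
        induction e with
        | _ a b =>
          have hadj : G.Adj a b := by simpa [SimpleGraph.mem_edgeFinset] using he
          have hne : a ≠ b := hadj.ne
          have : ((Finset.univ ×ˢ Finset.univ).filter
              (fun p : V × V => G.Adj p.1 p.2)).filter (fun p => s(p.1, p.2) = s(a, b))
              = {(a, b), (b, a)} := by
            ext ⟨u, v⟩
            simp only [Finset.mem_filter, Finset.mem_product, Finset.mem_univ, true_and,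
              Finset.mem_insert, Finset.mem_singleton, Prod.mk.injEq, Sym2.mk_eq_mk_iff, Sym2.eq_iff,
              Prod.swap_prod_mk]
            constructor
            · rintro ⟨-, h | h⟩
              · exact Or.inl h
              · exact Or.inr h
            · rintro (⟨rfl, rfl⟩ | ⟨rfl, rfl⟩)
              · exact ⟨hadj, Or.inl ⟨rfl, rfl⟩⟩
              · exact ⟨hadj.symm, Or.inr ⟨rfl, rfl⟩⟩
          rw [this]
          rw [Finset.sum_pair (by simp [hne, Prod.ext_iff])]
          simp
    _ = ∑ p ∈ (Finset.univ ×ˢ Finset.univ).filter (fun p : V × V => G.Adj p.1 p.2),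
        x p.1 * y p.2 := h1.symm
    _ = ∑ p ∈ Finset.univ ×ˢ Finset.univ, G.adjMatrix ℝ p.1 p.2 * (x p.1 * y p.2) := by
        rw [Finset.sum_filter]
        exact Finset.sum_congr rfl fun p _ => (h2 p.1 p.2).symm

/-- Rowlinson's double-eigenvector identity: if `x, y` are nonnegative eigenvectors of
`G, G'` with eigenvalues `ρ, ρ'`, then
`xᵀy·(ρ' - ρ) = ∑_{uv ∈ E(G')\E(G)} (x_u y_v + x_v y_u) - ∑_{uv ∈ E(G)\E(G')} (x_u y_v + x_v y_u)`. -/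
theorem double_eigenvector_identity {V : Type*} [Fintype V] [DecidableEq V]
    (G G' : SimpleGraph V) [DecidableRel G.Adj] [DecidableRel G'.Adj]
    (ρ ρ' : ℝ) (x y : V → ℝ) (hx : ∀ v, 0 ≤ x v) (hy : ∀ v, 0 ≤ y v)
    (hex : (G.adjMatrix ℝ).mulVec x = ρ • x)
    (hey : (G'.adjMatrix ℝ).mulVec y = ρ' • y) :
    (∑ v : V, x v * y v) * (ρ' - ρ) =
      (∑ e ∈ G'.edgeFinset \ G.edgeFinset,
        Sym2.lift ⟨fun u v => x u * y v + x v * y u, fun u v => by ring⟩ e)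
      - (∑ e ∈ G.edgeFinset \ G'.edgeFinset,
        Sym2.lift ⟨fun u v => x u * y v + x v * y u, fun u v => by ring⟩ e) := by
  classical
  rw [Finset.sum_sdiff_sub_sum_sdiff, sum_edges_eq, sum_edges_eq]
  have hA' : (∑ u : V, ∑ v : V, G'.adjMatrix ℝ u v * (x u * y v))
      = ρ' * ∑ v : V, x v * y v := by
    rw [Finset.mul_sum]
    apply Finset.sum_congr rfl
    intro u _
    have := congrFun hey u
    simp only [Matrix.mulVec, dotProduct, Pi.smul_apply, smul_eq_mul] at this
    calc ∑ v : V, G'.adjMatrix ℝ u v * (x u * y v)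
        = x u * ∑ v : V, G'.adjMatrix ℝ u v * y v := by
          rw [Finset.mul_sum]; apply Finset.sum_congr rfl; intro v _; ring
      _ = x u * (ρ' * y u) := by rw [this]
      _ = ρ' * (x u * y u) := by ring
  have hA : (∑ u : V, ∑ v : V, G.adjMatrix ℝ u v * (x u * y v))
      = ρ * ∑ v : V, x v * y v := by
    rw [Finset.sum_comm, Finset.mul_sum]
    apply Finset.sum_congr rfl
    intro v _
    have := congrFun hex v
    simp only [Matrix.mulVec, dotProduct, Pi.smul_apply, smul_eq_mul] at this
    calc ∑ u : V, G.adjMatrix ℝ u v * (x u * y v)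
        = (∑ u : V, G.adjMatrix ℝ v u * x u) * y v := by
          rw [Finset.sum_mul]; apply Finset.sum_congr rfl; intro u _
          by_cases h : G.Adj v u
          · simp [h, h.symm] 
          · have h2 : ¬ G.Adj u v := fun hc => h hc.symm
            simp [h, h2]
      _ = (ρ * x v) * y v := by rw [this]
      _ = ρ * (x v * y v) := by ring
  rw [hA, hA']; ring
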